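/- Let K be a field, u ∈ K with u ≠ 0 and u⁴ ≠ 1, n a finite index type, and M an n×n matrix over K. Assume there are indices a ≠ b such that rows a and b of M vanish outside columns a and b, with M_{a,a} = 0, M_{a,b} = M_{b,a} = u, M_{b,b} = u(u² − u⁻²); and indices c ≠ d such that rows c and d of M vanish outside columns c and d, with M_{c,c} = M_{d,d} = 0, M_{c,d} = M_{d,c} = u. If x₁, x₂, x₃, x₄ ∈ K satisfy (M − x₁I)(M − x₂I)(M − x₃I)(M − x₄I) = 0, then the multiset {x₁, x₂, x₃, x₄} equals the multiset {u³, u, −u, −u⁻¹}. -/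

import Mathlib

open Polynomial Matrix

private lemma sum_two {K : Type*} [Field K] {n : Type*} [Fintype n] [DecidableEq n]
    {a b : n} (hab : a ≠ b) (f : n → K) (h : ∀ k, k ≠ a → k ≠ b → f k = 0) :
    ∑ k, f k = f a + f b := by
  rw [← Finset.sum_pair hab]
  symm
  apply Finset.sum_subset (Finset.subset_univ _)
  intro x _ hx
  simp only [Finset.mem_insert, Finset.mem_singleton, not_or] at hx
  exact h x hx.1 hx.2

private lemma aux_dvd {K : Type*} [Field K] {n : Type*} [Fintype n] [DecidableEq n]
    (M : Matrix n n K) (P q : K[X]) (hq : q.Monic) (hdeg : q.degree = 2)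
    (i₁ i₂ : n) (hne : i₁ ≠ i₂) (u : K) (hu : u ≠ 0)
    (h11 : M i₁ i₁ = 0) (h12 : M i₁ i₂ = u)
    (hrow : ∀ j, (aeval M q) i₁ j = 0) (hP : aeval M P = 0) : q ∣ P := by
  rw [← Polynomial.modByMonic_eq_zero_iff_dvd hq]
  set r := P %ₘ q with hr
  have hdr : r.degree ≤ 1 := by
    have h2 := Polynomial.degree_modByMonic_lt P hq
    rw [hdeg] at h2
    rw [← hr] at h2
    exact Order.le_of_lt_succ (by exact_mod_cast h2)
  have hre : r = C (r.coeff 1) * X + C (r.coeff 0) :=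
    Polynomial.eq_X_add_C_of_degree_le_one hdr
  have hrM : aeval M r = r.coeff 1 • M + r.coeff 0 • 1 := by
    conv_lhs => rw [hre]
    simp [Algebra.algebraMap_eq_smul_one, smul_mul_assoc]
  have key : ∀ j, (aeval M r) i₁ j = 0 := by
    intro j
    have hsplit : P = q * (P /ₘ q) + r := by
      rw [hr, add_comm]; exact (Polynomial.modByMonic_add_div P q).symm
    have : (0 : Matrix n n K) = aeval M q * aeval M (P /ₘ q) + aeval M r := by
      rw [← hP]
      conv_lhs => rw [hsplit]
      rw [map_add, _root_.map_mul]
    have hj := congrFun (congrFun this i₁) j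
    simp only [Matrix.zero_apply, Matrix.add_apply, Matrix.mul_apply] at hj
    rw [Finset.sum_eq_zero (fun k _ => by rw [hrow k, zero_mul])] at hj
    rw [zero_add] at hj
    exact hj.symm
  have h1 : r.coeff 1 = 0 := by
    have := key i₂
    rw [hrM] at this
    simp only [Matrix.add_apply, Matrix.smul_apply, Matrix.one_apply, if_neg hne, h12,
      smul_eq_mul, mul_zero, add_zero] at this
    exact (mul_eq_zero.mp this).resolve_right hu
  have h0 : r.coeff 0 = 0 := by
    have := key i₁
    rw [hrM] at this
    simp only [Matrix.add_apply, Matrix.smul_apply, Matrix.one_apply_eq, h11,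
      smul_eq_mul, mul_zero, mul_one, zero_add] at this
    exact this
  rw [hre, h1, h0]
  simp

theorem stmt_12 {K : Type*} [Field K] (u : K) (hu : u ≠ 0) (hu4 : u ^ 4 ≠ 1)
    {n : Type*} [Fintype n] [DecidableEq n] (M : Matrix n n K)
    (a b : n) (hab : a ≠ b)
    (hrowa : ∀ j, j ≠ a → j ≠ b → M a j = 0)
    (hrowb : ∀ j, j ≠ a → j ≠ b → M b j = 0)
    (haa : M a a = 0) (hab' : M a b = u) (hba : M b a = u)
    (hbb : M b b = u * (u ^ 2 - u⁻¹ ^ 2))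
    (c d : n) (hcd : c ≠ d)
    (hrowc : ∀ j, j ≠ c → j ≠ d → M c j = 0)
    (hrowd : ∀ j, j ≠ c → j ≠ d → M d j = 0)
    (hcc : M c c = 0) (hdd : M d d = 0)
    (hcd' : M c d = u) (hdc : M d c = u)
    (x₁ x₂ x₃ x₄ : K)
    (hmin : (M - x₁ • 1) * (M - x₂ • 1) * (M - x₃ • 1) * (M - x₄ • 1) = 0) :
    ({x₁, x₂, x₃, x₄} : Multiset K) = {u ^ 3, u, -u, -u⁻¹} := by
  have hu2 : u ^ 2 ≠ 1 := fun h => hu4 (by rw [show (4:ℕ) = 2*2 by rfl, pow_mul, h, one_pow])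
  have hu2' : u ^ 2 ≠ -1 := fun h => hu4 (by rw [show (4:ℕ) = 2*2 by rfl, pow_mul, h]; ring)
  set P : K[X] := (X - C x₁) * (X - C x₂) * (X - C x₃) * (X - C x₄) with hPdef
  set qA : K[X] := (X - C (u ^ 3)) * (X - C (-u⁻¹)) with hqAdef
  set qC : K[X] := (X - C u) * (X - C (-u)) with hqCdef
  have hP : aeval M P = 0 := by
    rw [hPdef, _root_.map_mul, _root_.map_mul, _root_.map_mul, map_sub, map_sub, map_sub,
      map_sub, aeval_X, aeval_C, aeval_C, aeval_C, aeval_C]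
    simp only [Algebra.algebraMap_eq_smul_one]
    exact hmin
  -- row a of aeval M qA vanishes
  have hrowA : ∀ j, (aeval M qA) a j = 0 := by
    intro j
    have hev : aeval M qA = (M - (u^3) • 1) * (M - (-u⁻¹) • 1) := by
      rw [hqAdef, _root_.map_mul, map_sub, map_sub, aeval_X, aeval_C, aeval_C]
      simp only [Algebra.algebraMap_eq_smul_one]
    rw [hev, Matrix.mul_apply]
    rw [sum_two hab]
    · rcases eq_or_ne j a with rfl | hja
      · simp only [Matrix.sub_apply, Matrix.smul_apply, Matrix.one_apply_eq,
          Matrix.one_apply_ne hab, Matrix.one_apply_ne hab.symm, haa, hba, hab', smul_eq_mul]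
        field_simp
        ring
      · rcases eq_or_ne j b with rfl | hjb
        · simp only [Matrix.sub_apply, Matrix.smul_apply, Matrix.one_apply_eq,
            Matrix.one_apply_ne hab, Matrix.one_apply_ne hab.symm, haa, hab', hbb, smul_eq_mul]
          field_simp
          ring
        · simp only [Matrix.sub_apply, Matrix.smul_apply,
            Matrix.one_apply_ne (Ne.symm hja), Matrix.one_apply_ne (Ne.symm hjb),
            haa, hab', hrowa j hja hjb, hrowb j hja hjb, smul_eq_mul]
          ring
    · intro k hka hkb
      simp [Matrix.sub_apply, Matrix.smul_apply, Matrix.one_apply_ne (Ne.symm hka),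
        hrowa k hka hkb]
  -- row c of aeval M qC vanishes
  have hrowC : ∀ j, (aeval M qC) c j = 0 := by
    intro j
    have hev : aeval M qC = (M - u • 1) * (M - (-u) • 1) := by
      rw [hqCdef, _root_.map_mul, map_sub, map_sub, aeval_X, aeval_C, aeval_C]
      simp only [Algebra.algebraMap_eq_smul_one]
    rw [hev, Matrix.mul_apply]
    rw [sum_two hcd]
    · rcases eq_or_ne j c with rfl | hjc
      · simp only [Matrix.sub_apply, Matrix.smul_apply, Matrix.one_apply_eq,
          Matrix.one_apply_ne hcd, Matrix.one_apply_ne hcd.symm, hcc, hdc, hcd', smul_eq_mul]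
        ring
      · rcases eq_or_ne j d with rfl | hjd
        · simp only [Matrix.sub_apply, Matrix.smul_apply, Matrix.one_apply_eq,
            Matrix.one_apply_ne hcd, Matrix.one_apply_ne hcd.symm, hcc, hcd', hdd, smul_eq_mul]
          ring
        · simp only [Matrix.sub_apply, Matrix.smul_apply,
            Matrix.one_apply_ne (Ne.symm hjc), Matrix.one_apply_ne (Ne.symm hjd),
            hcc, hcd', hrowc j hjc hjd, hrowd j hjc hjd, smul_eq_mul]
          ring
    · intro k hkc hkd
      simp [Matrix.sub_apply, Matrix.smul_apply, Matrix.one_apply_ne (Ne.symm hkc),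
        hrowc k hkc hkd]
  have hqAmonic : qA.Monic := ((monic_X_sub_C _).mul (monic_X_sub_C _))
  have hqCmonic : qC.Monic := ((monic_X_sub_C _).mul (monic_X_sub_C _))
  have hqAdeg : qA.degree = 2 := by
    rw [hqAdef, degree_mul, degree_X_sub_C, degree_X_sub_C]; rfl
  have hqCdeg : qC.degree = 2 := by
    rw [hqCdef, degree_mul, degree_X_sub_C, degree_X_sub_C]; rfl
  have hdvdA : qA ∣ P := aux_dvd M P qA hqAmonic hqAdeg a b hab u hu haa hab' hrowA hP
  have hdvdC : qC ∣ P := aux_dvd M P qC hqCmonic hqCdeg c d hcd u hu hcc hcd' hrowC hP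
  have hcop : IsCoprime qA qC := by
    have h1 : IsCoprime (X - C (u^3)) (X - C u) :=
      isCoprime_X_sub_C_of_isUnit_sub (isUnit_iff_ne_zero.mpr (sub_ne_zero_of_ne (by
        intro h
        exact hu2 (mul_right_cancel₀ hu (by linear_combination h)))))
    have h2 : IsCoprime (X - C (u^3)) (X - C (-u)) :=
      isCoprime_X_sub_C_of_isUnit_sub (isUnit_iff_ne_zero.mpr (sub_ne_zero_of_ne (by
        intro h
        exact hu2' (mul_right_cancel₀ hu (by linear_combination h)))))
    have h3 : IsCoprime (X - C (-u⁻¹)) (X - C u) :=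
      isCoprime_X_sub_C_of_isUnit_sub (isUnit_iff_ne_zero.mpr (sub_ne_zero_of_ne (by
        intro h
        have h' : -u⁻¹ * u = u * u := by rw [h]
        rw [neg_mul, inv_mul_cancel₀ hu] at h'
        exact hu2' (by linear_combination -h'))))
    have h4 : IsCoprime (X - C (-u⁻¹)) (X - C (-u)) :=
      isCoprime_X_sub_C_of_isUnit_sub (isUnit_iff_ne_zero.mpr (sub_ne_zero_of_ne (by
        intro h
        have h' : -u⁻¹ * u = -u * u := by rw [h]
        rw [neg_mul, inv_mul_cancel₀ hu] at h'
        exact hu2 (by linear_combination h'))))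
    exact (IsCoprime.mul_right h1 h2).mul_left (IsCoprime.mul_right h3 h4)
  have hdvd : qA * qC ∣ P := hcop.mul_dvd hdvdA hdvdC
  have hPmonic : P.Monic := (((monic_X_sub_C x₁).mul (monic_X_sub_C x₂)).mul
    (monic_X_sub_C x₃)).mul (monic_X_sub_C x₄)
  have hPdeg : P.natDegree = 4 := by
    rw [hPdef, (((monic_X_sub_C x₁).mul (monic_X_sub_C x₂)).mul (monic_X_sub_C x₃)).natDegree_mul
      (monic_X_sub_C x₄), ((monic_X_sub_C x₁).mul (monic_X_sub_C x₂)).natDegree_mul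
      (monic_X_sub_C x₃), (monic_X_sub_C x₁).natDegree_mul (monic_X_sub_C x₂)]
    simp only [natDegree_X_sub_C]
  have hqqdeg : (qA * qC).natDegree = 4 := by
    rw [hqAmonic.natDegree_mul hqCmonic, hqAdef, hqCdef,
      (monic_X_sub_C _).natDegree_mul (monic_X_sub_C _),
      (monic_X_sub_C _).natDegree_mul (monic_X_sub_C _)]
    simp only [natDegree_X_sub_C]
  have hPeq : P = qA * qC := by
    obtain ⟨e, he⟩ := hdvd
    have hene : e ≠ 0 := by
      rintro rfl
      rw [mul_zero] at he
      exact hPmonic.ne_zero he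
    have hedeg : e.natDegree = 0 := by
      have h5 := hPdeg
      rw [he, natDegree_mul (hqAmonic.mul hqCmonic).ne_zero hene, hqqdeg] at h5
      omega
    have hemonic : e.Monic := by
      have hlc := congrArg leadingCoeff he
      rw [hPmonic.leadingCoeff, leadingCoeff_mul, (hqAmonic.mul hqCmonic).leadingCoeff,
        one_mul] at hlc
      exact hlc.symm
    rw [he, eq_one_of_monic_natDegree_zero hemonic hedeg, mul_one]
  -- compare roots
  have hroots := congrArg Polynomial.roots hPeq
  have hL : P = (({x₁, x₂, x₃, x₄} : Multiset K).map fun x => X - C x).prod := by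
    rw [hPdef]
    simp only [Multiset.insert_eq_cons, Multiset.map_cons, Multiset.map_singleton,
      Multiset.prod_cons, Multiset.prod_singleton]
    ring
  have hR : qA * qC = (({u ^ 3, u, -u, -u⁻¹} : Multiset K).map fun x => X - C x).prod := by
    rw [hqAdef, hqCdef]
    simp only [Multiset.insert_eq_cons, Multiset.map_cons, Multiset.map_singleton,
      Multiset.prod_cons, Multiset.prod_singleton]
    ring
  rw [hL, hR, roots_multiset_prod_X_sub_C, roots_multiset_prod_X_sub_C] at hroots
  exact hroots
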